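/- Assume that 𝔥 is spanned by the 𝔥-components of brackets of elements of 𝔪, i.e. 𝔥 = span{ [X,Y]_𝔥 : X,Y ∈ 𝔪 }. If the scalar curvature of the canonical connection vanishes, i.e. Σ_{i,j} Q_𝔥([Z_i,Z_j]_𝔥,[Z_i,Z_j]_𝔥) = 0, then Q_𝔥 is neither positive definite nor negative definite; in particular Q is not positive definite on 𝔤, so the metric cannot be normal homogeneous. -/
import Mathlib


open scoped BigOperators

/-- Assume `𝔥` is nontrivial and spanned by the `𝔥`-components of
brackets of elements of `𝔪`.  If the scalar curvature of the canonical connection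
vanishes, `Σ_{i,j} Q_𝔥([Z_i,Z_j]_𝔥,[Z_i,Z_j]_𝔥) = 0`, then `Q_𝔥` is neither positive
definite nor negative definite on `𝔥`; in particular `Q` is not positive definite
on `𝔤`, so the metric cannot be normal homogeneous. -/
theorem stmt18
    {𝔤 : Type*} [LieRing 𝔤] [LieAlgebra ℝ 𝔤] [FiniteDimensional ℝ 𝔤]
    (𝔥 𝔪 : Submodule ℝ 𝔤)
    (p𝔥 p𝔪 : 𝔤 →ₗ[ℝ] 𝔤)
    (hsum : ∀ x, p𝔥 x + p𝔪 x = x)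
    (hmem𝔥 : ∀ x, p𝔥 x ∈ 𝔥) (hmem𝔪 : ∀ x, p𝔪 x ∈ 𝔪)
    (hid𝔥 : ∀ x ∈ 𝔥, p𝔥 x = x) (hid𝔪 : ∀ x ∈ 𝔪, p𝔪 x = x)
    (hsub : ∀ x ∈ 𝔥, ∀ y ∈ 𝔥, ⁅x, y⁆ ∈ 𝔥)
    (hhm : ∀ x ∈ 𝔥, ∀ y ∈ 𝔪, ⁅x, y⁆ ∈ 𝔪)
    (Q : LinearMap.BilinForm ℝ 𝔤)
    (hQsymm : ∀ x y, Q x y = Q y x)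
    (hQinv : ∀ w u v : 𝔤, Q ⁅w, u⁆ v + Q u ⁅w, v⁆ = 0)
    (hQ𝔥𝔪 : ∀ x ∈ 𝔥, ∀ y ∈ 𝔪, Q x y = 0)
    (hQpos𝔪 : ∀ x ∈ 𝔪, x ≠ 0 → 0 < Q x x)
    (hQ𝔥nd : ∀ x ∈ 𝔥, (∀ y ∈ 𝔥, Q x y = 0) → x = 0)
    {n : ℕ} (Z : Fin n → 𝔤) (hZ𝔪 : ∀ i, Z i ∈ 𝔪)
    (hZon : ∀ i j, Q (Z i) (Z j) = if i = j then 1 else 0)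
    (hZspan : Submodule.span ℝ (Set.range Z) = 𝔪)
    (h𝔥ne : 𝔥 ≠ ⊥)
    (h𝔥span : 𝔥 = Submodule.span ℝ {w : 𝔤 | ∃ x ∈ 𝔪, ∃ y ∈ 𝔪, p𝔥 ⁅x, y⁆ = w})
    (hscal : ∑ i, ∑ j, Q (p𝔥 ⁅Z i, Z j⁆) (p𝔥 ⁅Z i, Z j⁆) = 0) :
    ¬ (∀ x ∈ 𝔥, x ≠ 0 → 0 < Q x x) ∧
    ¬ (∀ x ∈ 𝔥, x ≠ 0 → Q x x < 0) ∧
    ¬ (∀ x : 𝔤, x ≠ 0 → 0 < Q x x) := by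
  -- Step 1: from vanishing of all `p𝔥 ⁅Z i, Z j⁆`, deduce `𝔥 = ⊥`.
  have key : (∀ i j, p𝔥 ⁅Z i, Z j⁆ = 0) → False := by
    intro hzero
    have h1 : ∀ i, ∀ y ∈ 𝔪, p𝔥 ⁅Z i, y⁆ = 0 := by
      intro i y hy
      rw [← hZspan] at hy
      induction hy using Submodule.span_induction with
      | mem z hz => obtain ⟨j, rfl⟩ := hz; exact hzero i j
      | zero => simp
      | add a b _ _ ha hb => rw [lie_add, map_add, ha, hb, add_zero]
      | smul c a _ ha => rw [lie_smul, map_smul, ha, smul_zero]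
    have hB0 : ∀ x ∈ 𝔪, ∀ y ∈ 𝔪, p𝔥 ⁅x, y⁆ = 0 := by
      intro x hx
      rw [← hZspan] at hx
      induction hx using Submodule.span_induction with
      | mem z hz => obtain ⟨i, rfl⟩ := hz; intro y hy; exact h1 i y hy
      | zero => intro y hy; simp
      | add a b _ _ ha hb =>
          intro y hy; rw [add_lie, map_add, ha y hy, hb y hy, add_zero]
      | smul c a _ ha =>
          intro y hy; rw [smul_lie, map_smul, ha y hy, smul_zero]
    apply h𝔥ne
    rw [h𝔥span, Submodule.span_eq_bot]
    rintro w ⟨x, hx, y, hy, rfl⟩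
    exact hB0 x hx y hy
  -- Step 2: if Q is definite (of either sign) on 𝔥, each term is zero.
  have keypos : (∀ x ∈ 𝔥, x ≠ 0 → 0 < Q x x) → False := by
    intro hpos
    apply key
    have hnonneg : ∀ i j, 0 ≤ Q (p𝔥 ⁅Z i, Z j⁆) (p𝔥 ⁅Z i, Z j⁆) := by
      intro i j
      by_cases h : p𝔥 ⁅Z i, Z j⁆ = 0
      · simp [h]
      · exact le_of_lt (hpos _ (hmem𝔥 _) h)
    have hterm : ∀ i j, Q (p𝔥 ⁅Z i, Z j⁆) (p𝔥 ⁅Z i, Z j⁆) = 0 := by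
      intro i j
      have houter := (Finset.sum_eq_zero_iff_of_nonneg
        (fun i _ => Finset.sum_nonneg (fun j _ => hnonneg i j))).mp hscal i (Finset.mem_univ i)
      exact (Finset.sum_eq_zero_iff_of_nonneg
        (fun j _ => hnonneg i j)).mp houter j (Finset.mem_univ j)
    intro i j
    by_contra h
    exact absurd (hterm i j) (ne_of_gt (hpos _ (hmem𝔥 _) h))
  refine ⟨keypos, ?_, ?_⟩
  · intro hneg
    apply key
    have hnonpos : ∀ i j, Q (p𝔥 ⁅Z i, Z j⁆) (p𝔥 ⁅Z i, Z j⁆) ≤ 0 := by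
      intro i j
      by_cases h : p𝔥 ⁅Z i, Z j⁆ = 0
      · simp [h]
      · exact le_of_lt (hneg _ (hmem𝔥 _) h)
    have hscal' : ∑ i, ∑ j, -(Q (p𝔥 ⁅Z i, Z j⁆) (p𝔥 ⁅Z i, Z j⁆)) = 0 := by
      simp [Finset.sum_neg_distrib, hscal]
    have hterm : ∀ i j, -(Q (p𝔥 ⁅Z i, Z j⁆) (p𝔥 ⁅Z i, Z j⁆)) = 0 := by
      intro i j
      have houter := (Finset.sum_eq_zero_iff_of_nonneg
        (fun i _ => Finset.sum_nonneg (fun j _ => neg_nonneg.mpr (hnonpos i j)))).mp hscal' i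
        (Finset.mem_univ i)
      exact (Finset.sum_eq_zero_iff_of_nonneg
        (fun j _ => neg_nonneg.mpr (hnonpos i j))).mp houter j (Finset.mem_univ j)
    intro i j
    by_contra h
    have := hneg _ (hmem𝔥 (⁅Z i, Z j⁆)) h
    have := hterm i j
    linarith
  · intro hposall
    exact keypos (fun x _ hx => hposall x hx)
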